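/- arXiv:2408.06992 — 2 statements merged into one kernel-verified Lean document; each statement's English description precedes it below -/
import Mathlib

section
/- For every even integer n ≥ 4, det(L_n) = det(L_{n-2}) + 4(n-2); consequently, det(L_n) = (n-1)^2 for every even n ≥ 2. -/
open scoped Classical

/-- A tournament: irreflexive, and between distinct vertices exactly one arc. -/
def IsTournament {V : Type*} (r : V → V → Prop) : Prop :=
  (∀ i, ¬ r i i) ∧ ∀ i j, i ≠ j → (r i j ↔ ¬ r j i)

/-- Skew-adjacency matrix of a relation. -/
noncomputable def skew {V : Type*} (r : V → V → Prop) : Matrix V V ℤ :=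
  Matrix.of fun i j => if r i j then 1 else if r j i then -1 else 0

/-- Determinant of the skew-adjacency matrix. -/
noncomputable def tdet {V : Type*} [Fintype V] [DecidableEq V] (r : V → V → Prop) : ℤ :=
  (skew r).det

/-- Determinant of the subtournament induced by a finite vertex subset. -/
noncomputable def subdet {V : Type*} [Fintype V] [DecidableEq V] (r : V → V → Prop)
    (s : Finset V) : ℤ :=
  ((skew r).submatrix (fun x : {x // x ∈ s} => x.1) (fun x : {x // x ∈ s} => x.1)).det

/-- Switch of `r` with respect to `W`: arcs between `W` and its complement are reversed. -/
def switchRel {V : Type*} (r : V → V → Prop) (W : Set V) : V → V → Prop :=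
  fun i j => if (i ∈ W ↔ j ∈ W) then r i j else r j i

/-- Switching equivalence of two tournaments on the same vertex set. -/
def SwitchEquiv {V : Type*} (r₁ r₂ : V → V → Prop) : Prop :=
  ∃ W : Set V, ∀ i j, r₂ i j ↔ switchRel r₁ W i j

def IsTransitive {V : Type*} (r : V → V → Prop) : Prop :=
  ∀ a b c, r a b → r b c → r a c

def IsTransitiveOn {V : Type*} (r : V → V → Prop) (X : Finset V) : Prop :=
  ∀ a ∈ X, ∀ b ∈ X, ∀ c ∈ X, r a b → r b c → r a c

/-- A 4-set inducing a diamond: a vertex dominating or dominated by a 3-cycle. -/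
def IsDiamond {V : Type*} (r : V → V → Prop) (X : Finset V) : Prop :=
  ∃ a b c d : V, X = {a, b, c, d} ∧ a ≠ b ∧ a ≠ c ∧ a ≠ d ∧ b ≠ c ∧ b ≠ d ∧ c ≠ d ∧
    r b c ∧ r c d ∧ r d b ∧ ((r a b ∧ r a c ∧ r a d) ∨ (r b a ∧ r c a ∧ r d a))

/-- Number of diamonds of a tournament. -/
noncomputable def numDiamonds {V : Type*} [Fintype V] (r : V → V → Prop) : ℕ :=
  Set.ncard {X : Finset V | IsDiamond r X}

/-- The tournament `L_n`: a transitive chain `u_0 → ⋯ → u_{n-2}` together with a last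
vertex alternating along the chain, starting with `u_{n-1} → u_0`. -/
def LRel (n : ℕ) : Fin n → Fin n → Prop := fun i j =>
  (j.val < n - 1 ∧ i.val < j.val) ∨
  (j.val = n - 1 ∧ i.val < n - 1 ∧ i.val % 2 = 1) ∨
  (i.val = n - 1 ∧ j.val < n - 1 ∧ j.val % 2 = 0)

/-- Join of two tournaments: all arcs from the first to the second. -/
def joinRel {A B : Type*} (r : A → A → Prop) (s : B → B → Prop) : A ⊕ B → A ⊕ B → Prop :=
  fun x y => match x, y with
  | .inl a, .inl a' => r a a'
  | .inr b, .inr b' => s b b'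
  | .inl _, .inr _ => True
  | .inr _, .inl _ => False

/-- `T⁺`: add one new vertex dominated by every vertex of `T`. -/
def plusRel {A : Type*} (r : A → A → Prop) : Option A → Option A → Prop :=
  fun x y => match x, y with
  | some a, some b => r a b
  | some _, none => True
  | _, _ => False

/-- Blowup of `r` by the family of tournaments `t`. -/
def blowupG {ι : Type*} [DecidableEq ι] (r : ι → ι → Prop) {κ : ι → Type*}
    (t : ∀ i, κ i → κ i → Prop) : (Σ i, κ i) → (Σ i, κ i) → Prop :=
  fun x y => if h : x.1 = y.1 then t y.1 (h ▸ x.2) y.2 else r x.1 y.1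

/-- Transitive `(a_1,…,a_n)`-blowup of `r`. -/
def blowup {ι : Type*} [DecidableEq ι] (r : ι → ι → Prop) (a : ι → ℕ) :
    (Σ i, Fin (a i)) → (Σ i, Fin (a i)) → Prop :=
  blowupG r (fun _ p q => p < q)

/-- Membership in `𝒟_k`: every subtournament has determinant at most `k²`. -/
def memD {V : Type*} [Fintype V] [DecidableEq V] (r : V → V → Prop) (k : ℕ) : Prop :=
  ∀ s : Finset V, subdet r s ≤ (k : ℤ) ^ 2

-- Auxiliary development

def sgZ (i j : ℕ) : ℤ := if i < j then 1 else if j < i then -1 else 0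

def Tm (n : ℕ) : Matrix (Fin n) (Fin n) ℤ := Matrix.of fun i j => sgZ i.val j.val

def Wm (n : ℕ) : Matrix (Fin n) (Fin n) ℤ :=
  Matrix.of fun i j => sgZ i.val j.val * (-1) ^ (i.val + j.val)

lemma sgZ_self (a : ℕ) : sgZ a a = 0 := by simp [sgZ]
lemma sgZ_of_lt {a b : ℕ} (h : a < b) : sgZ a b = 1 := by simp [sgZ, h]
lemma sgZ_of_gt {a b : ℕ} (h : b < a) : sgZ a b = -1 := by
  unfold sgZ; split_ifs <;> omega
lemma sgZ_swap (a b : ℕ) : sgZ a b = - sgZ b a := by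
  unfold sgZ; split_ifs <;> omega

lemma altsum (m : ℕ) :
    ∑ k ∈ Finset.range m, ((-1 : ℤ)) ^ k = if m % 2 = 0 then 0 else 1 := by
  induction m with
  | zero => simp
  | succ m ih =>
    rw [Finset.sum_range_succ, ih]
    rcases Nat.even_or_odd m with h | h
    · rw [h.neg_one_pow]
      have h2 : m % 2 = 0 := Nat.even_iff.mp h
      have h3 : (m+1) % 2 = 1 := by omega
      simp [h2, h3]
    · rw [h.neg_one_pow]
      have h2 : m % 2 = 1 := Nat.odd_iff.mp h
      have h3 : (m+1) % 2 = 0 := by omega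
      simp [h2, h3]

lemma negpow (m : ℕ) : (-1 : ℤ) ^ m = if m % 2 = 0 then 1 else -1 := by
  rcases Nat.even_or_odd m with h | h
  · rw [h.neg_one_pow, if_pos (Nat.even_iff.mp h)]
  · rw [h.neg_one_pow, if_neg (by have := Nat.odd_iff.mp h; omega)]
    
lemma keylt (n i j : ℕ) (hn : n % 2 = 0) (hij : i < j) (hj : j < n) :
    ∑ k ∈ Finset.range n, sgZ i k * (sgZ k j * (-1) ^ (k + j)) = 0 := by
  have hpt : ∀ k ∈ Finset.range n, sgZ i k * (sgZ k j * (-1) ^ (k + j)) =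
      2 * ((-1 : ℤ) ^ j * (if i < k ∧ k < j then (-1 : ℤ) ^ k else 0))
      + ((if k = i then ((-1 : ℤ)) ^ (i + j) else 0) + (if k = j then (1 : ℤ) else 0))
      - (-1 : ℤ) ^ j * (-1) ^ k := by
    intro k _
    have hsq : (-1 : ℤ) ^ j * (-1) ^ j = 1 := by
      rw [← pow_add]; exact Even.neg_one_pow ⟨j, rfl⟩
    rcases lt_trichotomy k i with h1 | h1 | h1
    · rw [sgZ_of_gt h1, sgZ_of_lt (h1.trans hij), if_neg (by omega), if_neg (by omega),
        if_neg (by omega), pow_add]; ring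
    · subst h1
      rw [sgZ_self, if_neg (by omega), if_pos rfl, if_neg (by omega), pow_add]; ring
    · rcases lt_trichotomy k j with h2 | h2 | h2
      · rw [sgZ_of_lt h1, sgZ_of_lt h2, if_pos ⟨h1, h2⟩, if_neg (by omega),
          if_neg (by omega), pow_add]; ring
      · subst h2
        rw [sgZ_self, if_neg (by omega), if_neg (by omega), if_pos rfl, hsq]; ring
      · rw [sgZ_of_lt h1, sgZ_of_gt h2, if_neg (by omega), if_neg (by omega),
          if_neg (by omega), pow_add]; ring
  rw [Finset.sum_congr rfl hpt]
  rw [Finset.sum_sub_distrib, Finset.sum_add_distrib, Finset.sum_add_distrib,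
    ← Finset.mul_sum, ← Finset.mul_sum, ← Finset.mul_sum,
    Finset.sum_ite_eq' (Finset.range n) i, Finset.sum_ite_eq' (Finset.range n) j,
    if_pos (Finset.mem_range.mpr (hij.trans hj)), if_pos (Finset.mem_range.mpr hj),
    altsum n, if_pos hn]
  have hIoo : ∑ k ∈ Finset.range n, (if i < k ∧ k < j then (-1 : ℤ) ^ k else 0)
      = ∑ k ∈ Finset.Ico (i+1) j, (-1 : ℤ) ^ k := by
    rw [← Finset.sum_filter]
    congr 1
    ext a
    simp only [Finset.mem_filter, Finset.mem_range, Finset.mem_Ico]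
    omega
  rw [hIoo, Finset.sum_Ico_eq_sub _ (by omega : i + 1 ≤ j), altsum j, altsum (i+1), pow_add,
    negpow i, negpow j]
  split_ifs <;> first | omega | ring1

lemma key (n i j : ℕ) (hn : n % 2 = 0) (hi : i < n) (hj : j < n) :
    ∑ k ∈ Finset.range n, sgZ i k * (sgZ k j * (-1) ^ (k + j))
      = if i = j then 1 else 0 := by
  rcases lt_trichotomy i j with hij | hij | hij
  · rw [keylt n i j hn hij hj, if_neg hij.ne]
  · subst hij
    rw [if_pos rfl]
    have hpt : ∀ k ∈ Finset.range n, sgZ i k * (sgZ k i * (-1) ^ (k + i)) =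
        -((-1 : ℤ) ^ i * (-1) ^ k) + (if k = i then (1 : ℤ) else 0) := by
      intro k _
      rcases lt_trichotomy k i with h1 | h1 | h1
      · rw [sgZ_of_gt h1, sgZ_of_lt h1, if_neg (by omega), pow_add]; ring
      · subst h1; rw [sgZ_self, if_pos rfl, pow_add, negpow k]
        split_ifs <;> ring
      · rw [sgZ_of_lt h1, sgZ_of_gt h1, if_neg (by omega), pow_add]; ring
    rw [Finset.sum_congr rfl hpt, Finset.sum_add_distrib,
      Finset.sum_ite_eq' (Finset.range n) i, if_pos (Finset.mem_range.mpr hi)]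
    have : ∑ k ∈ Finset.range n, -((-1 : ℤ) ^ i * (-1) ^ k)
        = -((-1 : ℤ) ^ i * ∑ k ∈ Finset.range n, (-1 : ℤ) ^ k) := by
      rw [Finset.mul_sum, Finset.sum_neg_distrib]
    rw [this, altsum n, if_pos hn]; ring
  · -- use antisymmetry to reduce to the i < j case
    have hswap : ∀ k ∈ Finset.range n, sgZ i k * (sgZ k j * (-1) ^ (k + j))
        = (-1 : ℤ) ^ (i + j) * (sgZ j k * (sgZ k i * (-1) ^ (k + i))) := by
      intro k _
      rw [sgZ_swap j k, sgZ_swap k i]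
      have h1 : (-1 : ℤ) ^ (i + j) * (-1) ^ (k + i) = (-1) ^ (k + j) * ((-1) ^ i * (-1) ^ i) := by
        rw [pow_add, pow_add, pow_add]; ring
      have h2 : (-1 : ℤ) ^ i * (-1) ^ i = 1 := by
        rw [← pow_add]; exact Even.neg_one_pow ⟨i, rfl⟩
      calc sgZ i k * (sgZ k j * (-1) ^ (k + j))
          = sgZ k j * sgZ i k * (-1) ^ (k + j) := by ring
        _ = -sgZ k j * -sgZ i k * ((-1) ^ (k+j) * ((-1)^i * (-1)^i)) := by rw [h2]; ring
        _ = (-1 : ℤ) ^ (i + j) * (-sgZ k j * (-sgZ i k * (-1) ^ (k + i))) := by rw [← h1]; ring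
    rw [Finset.sum_congr rfl hswap, ← Finset.mul_sum, keylt n j i hn hij hi,
      if_neg hij.ne', mul_zero]

lemma TW (n : ℕ) (hn : n % 2 = 0) : Tm n * Wm n = 1 := by
  ext i j
  rw [Matrix.mul_apply, Matrix.one_apply]
  have hs : ∑ k : Fin n, Tm n i k * Wm n k j
      = ∑ k ∈ Finset.range n, sgZ i.val k * (sgZ k j.val * (-1) ^ (k + j.val)) := by
    rw [← Fin.sum_univ_eq_sum_range
      (fun k => sgZ i.val k * (sgZ k j.val * (-1) ^ (k + j.val))) n]
    exact Finset.sum_congr rfl (fun k _ => rfl)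
  rw [hs, key n i.val j.val hn i.isLt j.isLt]
  simp [Fin.ext_iff]

lemma Tm2 : Tm 2 = !![0, 1; -1, 0] := by
  ext i j
  fin_cases i <;> fin_cases j <;> simp [Tm, sgZ]

lemma Tm2_inv : Tm 2 * !![0, -1; 1, 0] = 1 := by
  rw [Tm2]
  ext i j
  fin_cases i <;> fin_cases j <;>
    simp [Matrix.mul_apply, Fin.sum_univ_two, Matrix.one_apply]

noncomputable instance : Invertible (Tm 2) := invertibleOfRightInverse _ _ Tm2_inv

lemma detTm_even : ∀ m : ℕ, (Tm (2 * m)).det = 1 := by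
  intro m
  induction m with
  | zero =>
    haveI : IsEmpty (Fin (2 * 0)) := ⟨fun x => absurd x.2 (by omega)⟩
    exact Matrix.det_isEmpty
  | succ m ih =>
    show (Tm (2 * m + 2)).det = 1
    have hsub : (Tm (2 * m + 2)).submatrix finSumFinEquiv finSumFinEquiv
        = Matrix.fromBlocks (Tm (2 * m)) (Matrix.of fun _ _ => (1 : ℤ))
            (Matrix.of fun _ _ => (-1 : ℤ)) (Tm 2) := by
      ext x y
      rcases x with i | p <;> rcases y with j | q <;>
        simp only [Matrix.submatrix_apply, finSumFinEquiv_apply_left,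
          finSumFinEquiv_apply_right, Matrix.fromBlocks_apply₁₁, Matrix.fromBlocks_apply₁₂,
          Matrix.fromBlocks_apply₂₁, Matrix.fromBlocks_apply₂₂, Tm, Matrix.of_apply,
          Fin.coe_castAdd, Fin.coe_natAdd]
      all_goals (unfold sgZ; split_ifs <;> omega)
    have hdet := Matrix.det_submatrix_equiv_self finSumFinEquiv (Tm (2 * m + 2))
    rw [← hdet, hsub, Matrix.det_fromBlocks₂₂ (Tm (2 * m)) (Matrix.of fun _ _ => (1 : ℤ))
      (Matrix.of fun _ _ => (-1 : ℤ)) (Tm 2)]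
    have hinv : ⅟(Tm 2) = !![0, -1; 1, 0] := invOf_eq_right_inv Tm2_inv
    have hzero : ((Matrix.of fun _ _ => (1 : ℤ)) : Matrix (Fin (2*m)) (Fin 2) ℤ) * ⅟(Tm 2)
        * ((Matrix.of fun _ _ => (-1 : ℤ)) : Matrix (Fin 2) (Fin (2*m)) ℤ)
        = (0 : Matrix (Fin (2*m)) (Fin (2*m)) ℤ) := by
      rw [hinv]
      ext i j
      rw [Matrix.mul_apply]
      simp [Matrix.mul_apply, Fin.sum_univ_two]
    rw [hzero, sub_zero, ih, mul_one, Tm2]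
    simp [Matrix.det_fin_two_of]

/-- indicator of even values, times -2 -/
def cvZ (n : ℕ) : Fin n → ℤ := fun k => if k.val % 2 = 0 then -2 else 0
def evZ (n : ℕ) : Fin n → ℤ := fun k => if k.val = n - 1 then 1 else 0

noncomputable def Um (n : ℕ) : Matrix (Fin n) (Fin 2) ℤ :=
  Matrix.of fun i p => ![cvZ n i, evZ n i] p
noncomputable def Vm (n : ℕ) : Matrix (Fin 2) (Fin n) ℤ :=
  Matrix.of fun p j => ![evZ n j, -cvZ n j] p

lemma UV_apply (n : ℕ) (i j : Fin n) :
    (Um n * Vm n) i j = cvZ n i * evZ n j - evZ n i * cvZ n j := by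
  rw [Matrix.mul_apply, Fin.sum_univ_two]
  simp [Um, Vm]
  ring

lemma skew_eq (n : ℕ) (hn : n % 2 = 0) : skew (LRel n) = Tm n + Um n * Vm n := by
  ext i j
  rw [Matrix.add_apply, UV_apply]
  have hi := i.isLt
  have hj := j.isLt
  simp only [skew, LRel, Tm, Wm, cvZ, evZ, sgZ, Matrix.of_apply, mul_ite, ite_mul, mul_one, one_mul,
    mul_zero, zero_mul]
  split_ifs <;> omega

-- the evensum lemma
lemma evensum (c : ℤ) : ∀ m : ℕ,
    ∑ k ∈ Finset.range (2 * m), (if k % 2 = 0 then c else 0) = m * c := by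
  intro m
  induction m with
  | zero => simp
  | succ m ih =>
    show ∑ k ∈ Finset.range (2 * m + 1 + 1), _ = _
    rw [Finset.sum_range_succ, Finset.sum_range_succ, ih,
      if_pos (by omega : (2 * m) % 2 = 0), if_neg (by omega : ¬ (2 * m + 1) % 2 = 0)]
    push_cast
    ring

section Xentries
variable (n : ℕ)

lemma ev_filter (f : Fin n → ℤ) (h2 : 2 ≤ n) :
    ∑ k : Fin n, evZ n k * f k = f ⟨n - 1, by omega⟩ := by
  have hpt : ∀ k : Fin n, evZ n k * f k
      = if k = (⟨n - 1, by omega⟩ : Fin n) then f k else 0 := by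
    intro k
    unfold evZ
    by_cases h : k.val = n - 1
    · rw [if_pos h, if_pos (Fin.ext h), one_mul]
    · rw [if_neg h, if_neg (fun hh => h (by rw [hh])), zero_mul]
  rw [Finset.sum_congr rfl (fun k _ => hpt k), Finset.sum_ite_eq',
    if_pos (Finset.mem_univ _)]

lemma cv_sum (hn : n % 2 = 0) (f : Fin n → ℤ)
    (hf : ∀ k : Fin n, k.val % 2 = 0 → f k = -2) :
    ∑ k : Fin n, (if k.val % 2 = 0 then f k else 0) = -(n : ℤ) := by
  have hpt : ∀ k : Fin n, (if k.val % 2 = 0 then f k else 0)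
      = (fun a : ℕ => if a % 2 = 0 then (-2 : ℤ) else 0) k.val := by
    intro k
    by_cases h : k.val % 2 = 0
    · simp only [if_pos h, hf k h]
    · simp only [if_neg h]
  obtain ⟨m, hm⟩ : ∃ m, n = 2 * m := ⟨n / 2, by omega⟩
  calc ∑ k : Fin n, (if k.val % 2 = 0 then f k else 0)
      = ∑ k : Fin n, (fun a : ℕ => if a % 2 = 0 then (-2 : ℤ) else 0) k.val :=
        Finset.sum_congr rfl (fun k _ => hpt k)
    _ = ∑ k ∈ Finset.range n, (fun a : ℕ => if a % 2 = 0 then (-2 : ℤ) else 0) k :=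
        Fin.sum_univ_eq_sum_range (fun a : ℕ => if a % 2 = 0 then (-2 : ℤ) else 0) n
    _ = (m : ℤ) * (-2) := by rw [hm]; exact evensum (-2) m
    _ = -(n : ℤ) := by rw [hm]; push_cast; ring

lemma WmL (hn : n % 2 = 0) (h2 : 2 ≤ n) (j : Fin n) (hj : j.val % 2 = 0) :
    Wm n ⟨n - 1, by omega⟩ j = 1 := by
  have hlt : j.val < n - 1 := by omega
  show sgZ (n-1) j.val * (-1 : ℤ) ^ (n - 1 + j.val) = 1
  rw [negpow, if_neg (by omega : ¬ (n - 1 + j.val) % 2 = 0)]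
  unfold sgZ
  split_ifs <;> omega

lemma WmR (hn : n % 2 = 0) (h2 : 2 ≤ n) (k : Fin n) (hk : k.val % 2 = 0) :
    Wm n k ⟨n - 1, by omega⟩ = -1 := by
  have hlt : k.val < n - 1 := by omega
  show sgZ k.val (n-1) * (-1 : ℤ) ^ (k.val + (n - 1)) = -1
  rw [negpow, if_neg (by omega : ¬ (k.val + (n - 1)) % 2 = 0)]
  unfold sgZ
  split_ifs <;> omega

lemma WmUm0 (k : Fin n) : (Wm n * Um n) k 0 = ∑ j : Fin n, Wm n k j * cvZ n j := by
  rw [Matrix.mul_apply]; rfl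

lemma WmUm1 (h2 : 2 ≤ n) : ∀ k : Fin n, (Wm n * Um n) k 1 = Wm n k ⟨n - 1, by omega⟩ := by
  intro k
  rw [Matrix.mul_apply]
  have : ∀ j : Fin n, Wm n k j * Um n j 1 = evZ n j * Wm n k j := by
    intro j; show Wm n k j * evZ n j = _; ring
  rw [Finset.sum_congr rfl (fun j _ => this j), ev_filter n (fun j => Wm n k j) h2]

lemma hX00 (hn : n % 2 = 0) (h2 : 2 ≤ n) : (Vm n * (Wm n * Um n)) 0 0 = -(n : ℤ) := by
  rw [Matrix.mul_apply]
  have hV : ∀ k : Fin n, Vm n 0 k * (Wm n * Um n) k 0 = evZ n k * (Wm n * Um n) k 0 :=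
    fun k => rfl
  rw [Finset.sum_congr rfl (fun k _ => hV k), ev_filter n _ h2, WmUm0]
  have hpt : ∀ j : Fin n, Wm n ⟨n - 1, by omega⟩ j * cvZ n j
      = if j.val % 2 = 0 then Wm n ⟨n - 1, by omega⟩ j * (-2) else 0 := by
    intro j
    unfold cvZ
    split_ifs <;> ring
  rw [Finset.sum_congr rfl (fun j _ => hpt j)]
  exact cv_sum n hn _ (fun j hj => by rw [WmL n hn h2 j hj]; ring)

lemma hX01 (hn : n % 2 = 0) (h2 : 2 ≤ n) : (Vm n * (Wm n * Um n)) 0 1 = 0 := by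
  rw [Matrix.mul_apply]
  have hV : ∀ k : Fin n, Vm n 0 k * (Wm n * Um n) k 1 = evZ n k * (Wm n * Um n) k 1 :=
    fun k => rfl
  rw [Finset.sum_congr rfl (fun k _ => hV k), ev_filter n _ h2, WmUm1 n h2]
  show sgZ (n-1) (n-1) * (-1 : ℤ) ^ _ = 0
  unfold sgZ
  simp

lemma hX11 (hn : n % 2 = 0) (h2 : 2 ≤ n) : (Vm n * (Wm n * Um n)) 1 1 = -(n : ℤ) := by
  rw [Matrix.mul_apply]
  have hV : ∀ k : Fin n, Vm n 1 k * (Wm n * Um n) k 1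
      = -cvZ n k * Wm n k ⟨n - 1, by omega⟩ := by
    intro k; rw [WmUm1 n h2]; rfl
  rw [Finset.sum_congr rfl (fun k _ => hV k)]
  have hpt : ∀ k : Fin n, -cvZ n k * Wm n k ⟨n - 1, by omega⟩
      = if k.val % 2 = 0 then 2 * Wm n k ⟨n - 1, by omega⟩ else 0 := by
    intro k
    unfold cvZ
    split_ifs <;> ring
  rw [Finset.sum_congr rfl (fun k _ => hpt k)]
  exact cv_sum n hn _ (fun k hk => by rw [WmR n hn h2 k hk]; ring)

lemma Wm_skew (k j : Fin n) : Wm n k j = - Wm n j k := by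
  show sgZ k.val j.val * (-1:ℤ)^(k.val + j.val) = -(sgZ j.val k.val * (-1:ℤ)^(j.val + k.val))
  rw [sgZ_swap, Nat.add_comm]
  ring

lemma hX10 (hn : n % 2 = 0) (h2 : 2 ≤ n) : (Vm n * (Wm n * Um n)) 1 0 = 0 := by
  rw [Matrix.mul_apply]
  have hV : ∀ k : Fin n, Vm n 1 k * (Wm n * Um n) k 0
      = ∑ j : Fin n, -cvZ n k * (Wm n k j * cvZ n j) := by
    intro k
    rw [WmUm0]
    show -cvZ n k * _ = _
    rw [Finset.mul_sum]
  rw [Finset.sum_congr rfl (fun k _ => hV k)]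
  set S := ∑ k : Fin n, ∑ j : Fin n, -cvZ n k * (Wm n k j * cvZ n j) with hS
  have hneg : S = -S := by
    nth_rewrite 1 [hS, Finset.sum_comm]
    have : ∀ j k : Fin n, -cvZ n k * (Wm n k j * cvZ n j)
        = -(-cvZ n j * (Wm n j k * cvZ n k)) := by
      intro j k
      rw [Wm_skew n j k]
      ring
    rw [Finset.sum_congr rfl (fun j _ => Finset.sum_congr rfl (fun k _ => this j k))]
    simp only [Finset.sum_neg_distrib]
    rfl
  linarith

end Xentries

lemma mainDet (n : ℕ) (hn : n % 2 = 0) (h2 : 2 ≤ n) :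
    (skew (LRel n)).det = ((n : ℤ) - 1) ^ 2 := by
  have hfac : skew (LRel n) = Tm n * (1 + Wm n * (Um n * Vm n)) := by
    rw [Matrix.mul_add, Matrix.mul_one, ← Matrix.mul_assoc, TW n hn, Matrix.one_mul,
      skew_eq n hn]
  obtain ⟨m, hm⟩ : ∃ m, n = 2 * m := ⟨n / 2, by omega⟩
  have hdT : (Tm n).det = 1 := by rw [hm]; exact detTm_even m
  rw [hfac, Matrix.det_mul, hdT, one_mul, ← Matrix.mul_assoc,
    Matrix.det_one_add_mul_comm, Matrix.det_fin_two]
  simp only [Matrix.add_apply, Matrix.one_apply_eq, Matrix.one_apply_ne (by decide : (0 : Fin 2) ≠ 1),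
    Matrix.one_apply_ne (by decide : (1 : Fin 2) ≠ 0)]
  rw [hX00 n hn h2, hX01 n hn h2, hX10 n hn h2, hX11 n hn h2]
  ring

theorem stmt17 :
    (∀ n : ℕ, Even n → 4 ≤ n →
      tdet (LRel n) = tdet (LRel (n - 2)) + 4 * ((n : ℤ) - 2)) ∧
    (∀ n : ℕ, Even n → 2 ≤ n → tdet (LRel n) = ((n : ℤ) - 1) ^ 2) := by
  have main : ∀ n : ℕ, Even n → 2 ≤ n → tdet (LRel n) = ((n : ℤ) - 1) ^ 2 := by
    intro n hev h2
    exact mainDet n (Nat.even_iff.mp hev) h2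
  refine ⟨?_, main⟩
  intro n hev h4
  have h1 := main n hev (by omega)
  have hev2 : Even (n - 2) := by
    rw [Nat.even_iff] at hev ⊢
    omega
  have h2 := main (n - 2) hev2 (by omega)
  rw [h1, h2]
  have hc : ((n - 2 : ℕ) : ℤ) = (n : ℤ) - 2 := by omega
  rw [hc]
  ring
end

section
/- Let n be a positive even integer and T an n-tournament with vertices v_1,...,v_n such that T restricted to {v_1,...,v_{n-1}} is transitive. Then det(T) ≤ (n-1)^2, with equality if and only if v_n's dominance pattern over the transitive ordering v_1 → ... → v_{n-1} strictly alternates (i.e., T is switching equivalent to L_n). -/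
open scoped Classical

section Proofs
open Matrix Finset

def tent (a b : ℕ) : ℤ := if a < b then 1 else if b < a then -1 else 0

lemma tent_symm (a b : ℕ) : tent b a = -tent a b := by
  unfold tent; rcases lt_trichotomy a b with h|h|h <;> simp [h, not_lt.2 h.le, h.not_gt] <;> omega

lemma two_mul_sum_Ico (a b : ℕ) (hab : a ≤ b) :
    2 * ∑ j ∈ Finset.Ico a b, (-1 : ℤ)^j = (-1)^a - (-1)^b := by
  induction b, hab using Nat.le_induction with
  | base => simp
  | succ b hab ih =>
      rw [Finset.sum_Ico_succ_top hab, mul_add, ih, pow_succ]; ring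

lemma sum_range_neg_one_pow (n : ℕ) (hn : Even n) :
    ∑ j ∈ Finset.range n, (-1 : ℤ)^j = 0 := by
  rw [neg_one_geom_sum, if_pos hn]

lemma sum_range_neg_one_pow_odd (n : ℕ) (hn : ¬ Even n) :
    ∑ j ∈ Finset.range n, (-1 : ℤ)^j = 1 := by
  rw [neg_one_geom_sum, if_neg hn]

lemma sum_tent (n : ℕ) (hn : Even n) (i k : ℕ) (hi : i < n) (hk : k < n) :
    ∑ j ∈ Finset.range n, tent i j * (-1:ℤ)^j * tent j k
      = if i = k then (-1)^i else 0 := by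
  rcases eq_or_ne i k with rfl | hik
  · rw [if_pos rfl]
    have hpt : ∀ j ∈ Finset.range n,
        tent i j * (-1:ℤ)^j * tent j i = (if j = i then (-1:ℤ)^i else 0) - (-1)^j := by
      intro j _
      unfold tent
      rcases lt_trichotomy i j with h|h|h
      · rw [if_pos h, if_neg (by omega : ¬ j < i), if_pos h, if_neg (by omega : j ≠ i)]; ring
      · subst h; simp
      · rw [if_neg (by omega : ¬ i < j), if_pos h, if_pos h, if_neg (by omega : j ≠ i)]; ring
    rw [Finset.sum_congr rfl hpt, Finset.sum_sub_distrib,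
      Finset.sum_ite_eq' (Finset.range n) i (fun _ => (-1:ℤ)^i),
      if_pos (Finset.mem_range.2 hi), sum_range_neg_one_pow n hn, sub_zero]
  · rw [if_neg hik]
    -- symmetry reduction
    have key : ∀ a b : ℕ, a < b → b < n →
        ∑ j ∈ Finset.range n, tent a j * (-1:ℤ)^j * tent j b = 0 := by
      intro a b hab hbn
      have hpt : ∀ j ∈ Finset.range n,
          tent a j * (-1:ℤ)^j * tent j b
            = -(-1:ℤ)^j + 2*(if a < j ∧ j < b then (-1:ℤ)^j else 0)
              + (if j = a then (-1:ℤ)^a else 0) + (if j = b then (-1:ℤ)^b else 0) := by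
        intro j _
        unfold tent
        rcases lt_trichotomy j a with h|h|h
        · rw [if_neg (by omega), if_pos h, if_pos (by omega), if_neg (by omega),
            if_neg (by omega), if_neg (by omega)]; ring
        · subst h
          rw [if_neg (by omega), if_neg (by omega), if_pos hab, if_neg (by omega),
            if_pos rfl, if_neg (by omega)]; ring
        · rcases lt_trichotomy j b with h2|h2|h2
          · rw [if_pos h, if_pos h2, if_pos ⟨h, h2⟩, if_neg (by omega), if_neg (by omega)]; ring
          · subst h2
            rw [if_pos h, if_neg (by omega), if_neg (by omega), if_neg (by omega),
              if_neg (by omega), if_pos rfl]; ring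
          · rw [if_pos h, if_neg (by omega), if_pos h2, if_neg (by omega), if_neg (by omega),
              if_neg (by omega)]; ring
      rw [Finset.sum_congr rfl hpt]
      have hfilter : (Finset.range n).filter (fun j => a < j ∧ j < b) = Finset.Ico (a+1) b := by
        ext j; simp [Finset.mem_Ico, Finset.mem_filter, Finset.mem_range]; omega
      have h2 : ∑ j ∈ Finset.range n, (if a < j ∧ j < b then (-1:ℤ)^j else 0)
          = ∑ j ∈ Finset.Ico (a+1) b, (-1:ℤ)^j := by
        rw [← Finset.sum_filter, hfilter]
      have h3 := two_mul_sum_Ico (a+1) b (by omega)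
      simp only [Finset.sum_add_distrib, Finset.sum_neg_distrib, ← Finset.mul_sum]
      rw [sum_range_neg_one_pow n hn, h2, h3,
        Finset.sum_ite_eq' (Finset.range n) a (fun _ => (-1:ℤ)^a),
        Finset.sum_ite_eq' (Finset.range n) b (fun _ => (-1:ℤ)^b),
        if_pos (Finset.mem_range.2 (by omega)), if_pos (Finset.mem_range.2 hbn), pow_succ]
      ring
    rcases hik.lt_or_gt with h | h
    · exact key i k h hk
    · have := key k i h hi
      rw [← this]
      apply Finset.sum_congr rfl
      intro j _
      rw [tent_symm i j, tent_symm j k]; ring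

def chainM (n : ℕ) : Matrix (Fin n) (Fin n) ℤ := Matrix.of fun i j => tent i.val j.val
def DM (n : ℕ) : Matrix (Fin n) (Fin n) ℤ := Matrix.diagonal fun i => (-1)^(i:ℕ)

lemma DM_chain_DM_apply (n : ℕ) (i j : Fin n) :
    (DM n * chainM n * DM n) i j = (-1:ℤ)^(i:ℕ) * tent i.val j.val * (-1)^(j:ℕ) := by
  simp only [DM, chainM, Matrix.mul_diagonal, Matrix.diagonal_mul, Matrix.of_apply]

lemma chain_mul_inv (n : ℕ) (hn : Even n) : chainM n * (DM n * chainM n * DM n) = 1 := by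
  ext i k
  rw [Matrix.mul_apply]
  have h1 : ∀ j : Fin n, chainM n i j * (DM n * chainM n * DM n) j k
      = (tent i.val j.val * (-1:ℤ)^(j:ℕ) * tent j.val k.val) * (-1)^(k:ℕ) := by
    intro j; rw [DM_chain_DM_apply]; simp only [chainM, Matrix.of_apply]; ring
  rw [Finset.sum_congr rfl (fun j _ => h1 j), ← Finset.sum_mul]
  rw [Fin.sum_univ_eq_sum_range (fun j => tent i.val j * (-1:ℤ)^j * tent j k.val)]
  rw [sum_tent n hn i.val k.val i.isLt k.isLt]
  rcases eq_or_ne i k with rfl | h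
  · rw [if_pos rfl, Matrix.one_apply_eq, ← pow_add]
    exact Even.neg_one_pow ⟨(i:ℕ), rfl⟩
  · rw [if_neg (fun hh => h (Fin.ext hh)), Matrix.one_apply_ne h, zero_mul]

lemma sum_sum_skew {m : Type*} [Fintype m] (f : m → m → ℤ) (h : ∀ a b, f b a = -f a b) :
    ∑ a, ∑ b, f a b = 0 := by
  have h1 : ∑ a, ∑ b, f a b = ∑ b, ∑ a, f a b := Finset.sum_comm
  have h2 : ∑ b : m, ∑ a : m, f a b = -∑ a, ∑ b, f a b := by
    rw [← Finset.sum_neg_distrib]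
    exact Finset.sum_congr rfl fun b _ => by
      rw [← Finset.sum_neg_distrib]
      exact Finset.sum_congr rfl fun a _ => by rw [← h]
  omega

lemma det_add_mul {m : Type*} [Fintype m] [DecidableEq m] (M Minv : Matrix m m ℤ)
    (h : M * Minv = 1) (X : Matrix m (Fin 2) ℤ) (Y : Matrix (Fin 2) m ℤ) :
    (M + X * Y).det = M.det * (1 + Y * (Minv * X)).det := by
  have h2 : M + X * Y = M * (1 + Minv * X * Y) := by
    rw [mul_add, mul_one, ← Matrix.mul_assoc, ← Matrix.mul_assoc, h, Matrix.one_mul]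
  rw [h2, Matrix.det_mul, Matrix.det_one_add_mul_comm]

lemma tent_shift (n a b : ℕ) : tent (n+a) (n+b) = tent a b := by
  unfold tent
  rcases lt_trichotomy a b with h|h|h
  · rw [if_pos (by omega), if_pos h]
  · subst h; rw [if_neg (by omega), if_neg (by omega), if_neg (by omega), if_neg (by omega)]
  · rw [if_neg (by omega), if_pos (by omega), if_neg (by omega), if_pos h]

lemma DCD_symm (n : ℕ) (i j : Fin n) :
    (DM n * chainM n * DM n) j i = -((DM n * chainM n * DM n) i j) := by
  simp only [DM, chainM, Matrix.mul_diagonal, Matrix.diagonal_mul, Matrix.of_apply]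
  rw [tent_symm]; ring

lemma det_chainM_step (n : ℕ) (hn : Even n) : (chainM (n+2)).det = (chainM n).det := by
  classical
  rw [← Matrix.det_submatrix_equiv_self (finSumFinEquiv (m := n) (n := 2))]
  set v : Fin n ⊕ Fin 2 → ℤ := Sum.elim (fun _ => 1) (fun _ => 0) with hv
  set w : Fin n ⊕ Fin 2 → ℤ := Sum.elim (fun _ => 0) (fun _ => 1) with hw
  set X : Matrix (Fin n ⊕ Fin 2) (Fin 2) ℤ :=
    Matrix.of (fun i a => if a = 0 then v i else -(w i)) with hX
  set Y : Matrix (Fin 2) (Fin n ⊕ Fin 2) ℤ :=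
    Matrix.of (fun a j => if a = 0 then w j else v j) with hY
  set B : Matrix (Fin n ⊕ Fin 2) (Fin n ⊕ Fin 2) ℤ :=
    Matrix.fromBlocks (chainM n) 0 0 (chainM 2) with hB
  set Binv : Matrix (Fin n ⊕ Fin 2) (Fin n ⊕ Fin 2) ℤ :=
    Matrix.fromBlocks (DM n * chainM n * DM n) 0 0 (DM 2 * chainM 2 * DM 2) with hBinv
  have hXY : ∀ i j, (X * Y) i j = v i * w j - w i * v j := by
    intro i j
    rw [Matrix.mul_apply, Fin.sum_univ_two]
    simp [hX, hY]
    ring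
  have hsub : (chainM (n+2)).submatrix finSumFinEquiv finSumFinEquiv = B + X * Y := by
    ext i j
    rw [Matrix.add_apply, hXY]
    rcases i with a | a <;> rcases j with b | b <;>
      simp only [Matrix.submatrix_apply, finSumFinEquiv_apply_left, finSumFinEquiv_apply_right,
        chainM, Matrix.of_apply, Fin.coe_castAdd, Fin.coe_natAdd, hB,
        Matrix.fromBlocks_apply₁₁, Matrix.fromBlocks_apply₁₂, Matrix.fromBlocks_apply₂₁,
        Matrix.fromBlocks_apply₂₂, hv, hw, Sum.elim_inl, Sum.elim_inr, Matrix.zero_apply]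
    · ring
    · unfold tent; rw [if_pos (by omega)]; ring
    · unfold tent; rw [if_neg (by omega), if_pos (by omega)]; ring
    · rw [tent_shift]; ring
  have hBB : B * Binv = 1 := by
    rw [hB, hBinv, Matrix.fromBlocks_multiply]
    simp only [Matrix.mul_zero, Matrix.zero_mul, add_zero, zero_add,
      chain_mul_inv n hn, chain_mul_inv 2 (by decide)]
    exact Matrix.fromBlocks_one
  rw [hsub, det_add_mul B Binv hBB X Y]
  have hC : Y * (Binv * X) = 0 := by
    ext a b
    rw [Matrix.mul_apply, Matrix.zero_apply]
    have expand : ∀ j, Y a j * (Binv * X) j b = ∑ l, Y a j * (Binv j l * X l b) := by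
      intro j; rw [Matrix.mul_apply, Finset.mul_sum]
    rw [Finset.sum_congr rfl fun j _ => expand j]
    fin_cases a <;> fin_cases b <;>
      simp only [Fintype.sum_sum_type, hY, hX, hBinv, hv, hw, Matrix.of_apply,
        Matrix.fromBlocks_apply₁₁, Matrix.fromBlocks_apply₁₂, Matrix.fromBlocks_apply₂₁,
        Matrix.fromBlocks_apply₂₂, Sum.elim_inl, Sum.elim_inr]
    · -- a=0 b=0
      simp
    · simp [Fin.sum_univ_two]
      decide
    · -- a=1 b=0 : uses skew double sum
      norm_num
      exact sum_sum_skew _ (fun a b => DCD_symm n a b)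
    · simp
  rw [hC, add_zero, Matrix.det_one, mul_one, hB, Matrix.det_fromBlocks_zero₂₁]
  have : (chainM 2).det = 1 := by decide
  rw [this, mul_one]

lemma det_chainM : ∀ n, Even n → (chainM n).det = 1 := by
  intro n
  induction n using Nat.strong_induction_on with
  | _ n ih =>
    intro hn
    rcases Nat.eq_zero_or_pos n with h0 | h0
    · subst h0; exact Matrix.det_isEmpty
    · obtain ⟨m, rfl⟩ : ∃ m, n = m + 2 := ⟨n - 2, by rw [Nat.even_iff] at hn; omega⟩
      have hm : Even m := by rw [Nat.even_iff] at hn ⊢; omega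
      rw [det_chainM_step m hm]
      exact ih m (by omega) hm

def AM (n : ℕ) (ε : Fin n → ℤ) : Matrix (Fin n) (Fin n) ℤ :=
  Matrix.of fun i j => if i = j then 0 else if (j:ℕ) = n-1 then ε i
    else if (i:ℕ) = n-1 then -ε j else tent i.val j.val

lemma DCD_apply (n : ℕ) (i j : Fin n) :
    (DM n * chainM n * DM n) i j = (-1:ℤ)^(i:ℕ) * tent i.val j.val * (-1)^(j:ℕ) := by
  simp only [DM, chainM, Matrix.mul_diagonal, Matrix.diagonal_mul, Matrix.of_apply]

lemma det_AM (n : ℕ) (hn : Even n) (hpos : 0 < n) (ε : Fin n → ℤ) :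
    (AM n ε).det = (∑ j : Fin n, if (j:ℕ) < n-1 then (-1:ℤ)^(j:ℕ) * ε j else 0)^2 := by
  classical
  have hodd : Odd (n-1) := Nat.Even.sub_odd hpos hn odd_one
  have hne : ¬ Even (n-1) := Nat.not_even_iff_odd.mpr hodd
  set last : Fin n := ⟨n-1, by omega⟩ with hlastdef
  have hlast_iff : ∀ k : Fin n, k = last ↔ (k:ℕ) = n-1 :=
    fun k => ⟨fun h => by rw [h], fun h => Fin.ext h⟩
  set u : Fin n → ℤ := fun i => if (i:ℕ) < n-1 then ε i - 1 else 0 with hu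
  set S : ℤ := ∑ j : Fin n, if (j:ℕ) < n-1 then (-1:ℤ)^(j:ℕ) * ε j else 0 with hS
  set X : Matrix (Fin n) (Fin 2) ℤ :=
    Matrix.of (fun i a => if a = 0 then u i else if i = last then -1 else 0) with hX
  set Y : Matrix (Fin 2) (Fin n) ℤ :=
    Matrix.of (fun a j => if a = 0 then (if j = last then 1 else 0) else u j) with hY
  set T' : Matrix (Fin n) (Fin n) ℤ := DM n * chainM n * DM n with hT'
  have hu_last : u last = 0 := by rw [hu]; simp [hlastdef]
  have hAM : AM n ε = chainM n + X * Y := by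
    ext i j
    have hXY : (X * Y) i j = u i * (if j = last then 1 else 0)
        + (if i = last then -1 else 0) * u j := by
      rw [Matrix.mul_apply, Fin.sum_univ_two]
      simp [hX, hY]
    rw [Matrix.add_apply, hXY]
    by_cases hij : i = j
    · subst hij
      rw [show AM n ε i i = 0 from if_pos rfl]
      by_cases hil : i = last
      · rw [if_pos hil, if_pos hil, hil, hu_last]
        simp [chainM, tent]
      · rw [if_neg hil, if_neg hil]
        simp [chainM, tent]
    · by_cases hjl : j = last
      · have hjv : (j:ℕ) = n - 1 := (hlast_iff j).1 hjl
        have hij' : (i:ℕ) < n - 1 := by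
          have h1 : (i:ℕ) ≠ n-1 := fun hh => hij (Fin.ext (by omega))
          have := i.isLt
          omega
        have : AM n ε i j = ε i := by
          rw [AM, Matrix.of_apply, if_neg hij, if_pos hjv]
        rw [this, if_pos hjl, if_neg (fun hh => by
          have := (hlast_iff i).1 hh; omega)]
        rw [show chainM n i j = 1 from by
          rw [chainM, Matrix.of_apply]
          unfold tent; rw [if_pos (by omega)]]
        simp only [hu]
        rw [if_pos hij']; ring
      · by_cases hil : i = last
        · have hjj : (j:ℕ) < n - 1 := by
            have := (hlast_iff j).not.1 hjl; omega
          have : AM n ε i j = -ε j := by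
            rw [AM, Matrix.of_apply, if_neg hij,
              if_neg (by rw [← hlast_iff]; exact hjl), if_pos ((hlast_iff i).1 hil)]
          rw [this, if_neg hjl, if_pos hil]
          rw [show chainM n i j = -1 from by
            rw [chainM, Matrix.of_apply]
            have : (i:ℕ) = n-1 := (hlast_iff i).1 hil
            unfold tent; rw [if_neg (by omega), if_pos (by omega)]]
          simp only [hu]
          rw [if_pos hjj]; ring
        · have : AM n ε i j = tent i.val j.val := by
            rw [AM, Matrix.of_apply, if_neg hij,
              if_neg (by rw [← hlast_iff]; exact hjl),
              if_neg (by rw [← hlast_iff]; exact hil)]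
          rw [this, if_neg hjl, if_neg hil, chainM, Matrix.of_apply]; ring
  -- the scalar s
  have hT'lastlast : T' last last = 0 := by
    rw [hT', DCD_apply]; unfold tent; simp
  have hsum_ones : (∑ l : Fin n, if (l:ℕ) < n-1 then (-1:ℤ)^(l:ℕ) else 0) = 1 := by
    rw [Fin.sum_univ_eq_sum_range (fun j => if j < n-1 then (-1:ℤ)^j else 0)]
    rw [← Finset.sum_filter]
    have : (Finset.range n).filter (fun j => j < n-1) = Finset.range (n-1) := by
      ext j; simp [Finset.mem_filter, Finset.mem_range]; omega
    rw [this, sum_range_neg_one_pow_odd _ hne]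
  have hs : (∑ l : Fin n, T' last l * u l) = S - 1 := by
    have hpt : ∀ l : Fin n, T' last l * u l
        = (if (l:ℕ) < n-1 then (-1:ℤ)^(l:ℕ) * ε l else 0)
          - (if (l:ℕ) < n-1 then (-1:ℤ)^(l:ℕ) else 0) := by
      intro l
      rw [hT', DCD_apply]
      simp only [hu]
      by_cases hl : (l:ℕ) < n-1
      · rw [if_pos hl, if_pos hl, if_pos hl]
        have h1 : tent (last:ℕ) (l:ℕ) = -1 := by
          unfold tent
          rw [if_neg (by simp [hlastdef]; omega), if_pos (by simp [hlastdef]; omega)]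
        have h2 : ((-1:ℤ))^((last:Fin n):ℕ) = -1 := by
          simp only [hlastdef]
          exact Odd.neg_one_pow hodd
        rw [h1, h2]; ring
      · rw [if_neg hl, if_neg hl, if_neg hl]; ring
    rw [Finset.sum_congr rfl (fun l _ => hpt l), Finset.sum_sub_distrib, hsum_ones, ← hS]
  -- compute C = Y * (T' * X)
  have hTX0 : ∀ j : Fin n, (T' * X) j 0 = ∑ l, T' j l * u l := by
    intro j; rw [Matrix.mul_apply]
    exact Finset.sum_congr rfl fun l _ => by rw [hX]; simp
  have hTX1 : ∀ j : Fin n, (T' * X) j 1 = -(T' j last) := by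
    intro j; rw [Matrix.mul_apply]
    have : ∀ l : Fin n, T' j l * X l 1 = if l = last then -(T' j l) else 0 := by
      intro l; rw [hX]; simp only [Matrix.of_apply]
      rw [if_neg (by decide : ¬ (1:Fin 2) = 0)]
      by_cases h : l = last <;> simp [h]
    rw [Finset.sum_congr rfl fun l _ => this l, Finset.sum_ite_eq' Finset.univ last]
    simp
  have hC00 : (Y * (T' * X)) 0 0 = S - 1 := by
    rw [Matrix.mul_apply]
    have : ∀ j : Fin n, Y 0 j * (T' * X) j 0 = if j = last then (T' * X) j 0 else 0 := by
      intro j; rw [hY]; simp only [Matrix.of_apply, if_pos rfl]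
      by_cases h : j = last <;> simp [h]
    rw [Finset.sum_congr rfl fun j _ => this j, Finset.sum_ite_eq' Finset.univ last, if_pos (Finset.mem_univ _), hTX0, hs]
  have hC01 : (Y * (T' * X)) 0 1 = 0 := by
    rw [Matrix.mul_apply]
    have : ∀ j : Fin n, Y 0 j * (T' * X) j 1 = if j = last then -(T' j last) else 0 := by
      intro j; rw [hY, hTX1]; simp only [Matrix.of_apply, if_pos rfl]
      by_cases h : j = last <;> simp [h]
    rw [Finset.sum_congr rfl fun j _ => this j, Finset.sum_ite_eq' Finset.univ last,
      if_pos (Finset.mem_univ _), hT'lastlast, neg_zero]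
  have hC10 : (Y * (T' * X)) 1 0 = 0 := by
    rw [Matrix.mul_apply]
    have h1 : ∀ j : Fin n, Y 1 j * (T' * X) j 0 = ∑ l, u j * T' j l * u l := by
      intro j
      rw [hTX0, hY]
      simp only [Matrix.of_apply, if_neg (by decide : ¬ (1:Fin 2) = 0)]
      rw [Finset.mul_sum]
      exact Finset.sum_congr rfl fun l _ => by ring
    rw [Finset.sum_congr rfl fun j _ => h1 j]
    exact sum_sum_skew (fun j l => u j * T' j l * u l)
      (fun a b => by
        show u b * T' b a * u a = -(u a * T' a b * u b)
        rw [hT', DCD_symm]; ring)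
  have hC11 : (Y * (T' * X)) 1 1 = S - 1 := by
    rw [Matrix.mul_apply]
    have h1 : ∀ j : Fin n, Y 1 j * (T' * X) j 1 = T' last j * u j := by
      intro j
      rw [hTX1, hY]
      simp only [Matrix.of_apply, if_neg (by decide : ¬ (1:Fin 2) = 0)]
      rw [hT', DCD_symm]; ring
    rw [Finset.sum_congr rfl fun j _ => h1 j, hs]
  rw [hAM, det_add_mul _ _ (chain_mul_inv n hn) X Y, det_chainM n hn, one_mul]
  rw [Matrix.det_fin_two, ← hT']
  simp only [Matrix.add_apply, Matrix.one_apply_eq, Matrix.one_apply_ne (by decide : (0:Fin 2) ≠ 1),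
    Matrix.one_apply_ne (by decide : (1:Fin 2) ≠ 0), hC00, hC01, hC10, hC11]
  ring

lemma rel_iff_skew_one {V : Type*} (r : V → V → Prop) (i j : V) :
    r i j ↔ skew r i j = 1 := by
  by_cases h : r i j
  · simp [skew, h]
  · by_cases h2 : r j i <;> simp [skew, h, h2]

lemma skew_antisymm {V : Type*} {r : V → V → Prop} (hT : IsTournament r) (i j : V) :
    skew r j i = -(skew r i j) := by
  rcases eq_or_ne i j with rfl | hij
  · simp [skew, hT.1 i]
  · by_cases h : r i j
    · have h2 : ¬ r j i := by rw [← (hT.2 i j hij)] at *; tauto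
      simp [skew, h, h2]
    · have h2 : r j i := (hT.2 j i hij.symm).2 h
      simp [skew, h, h2]

lemma skew_congr {V : Type*} {r₁ r₂ : V → V → Prop} (h : ∀ i j, r₁ i j ↔ r₂ i j) :
    skew r₁ = skew r₂ := by
  ext i j
  exact if_congr (h i j) rfl (if_congr (h j i) rfl rfl)

lemma tdet_congr {V : Type*} [Fintype V] [DecidableEq V] {r₁ r₂ : V → V → Prop}
    (h : ∀ i j, r₁ i j ↔ r₂ i j) : tdet r₁ = tdet r₂ := by
  unfold tdet; rw [skew_congr h]

lemma tdet_relabel {n : ℕ} (r : Fin n → Fin n → Prop) (e : Equiv.Perm (Fin n)) :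
    tdet (fun i j => r (e i) (e j)) = tdet r := by
  unfold tdet
  have : skew (fun i j => r (e i) (e j)) = (skew r).submatrix e e := rfl
  rw [this, Matrix.det_submatrix_equiv_self]

lemma tdet_switch {n : ℕ} {r : Fin n → Fin n → Prop} (hT : IsTournament r) (W : Set (Fin n)) :
    tdet (switchRel r W) = tdet r := by
  classical
  set d : Fin n → ℤ := fun i => if i ∈ W then -1 else 1 with hd
  have key : skew (switchRel r W) = Matrix.diagonal d * skew r * Matrix.diagonal d := by
    ext i j
    rw [Matrix.mul_diagonal, Matrix.diagonal_mul]
    rcases eq_or_ne i j with rfl | hij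
    · have : skew (switchRel r W) i i = 0 := by
        have : ¬ switchRel r W i i := by
          unfold switchRel; rw [if_pos Iff.rfl]; exact hT.1 i
        simp [skew, this]
      rw [this]
      have : skew r i i = 0 := by simp [skew, hT.1 i]
      rw [this]; ring
    · by_cases hiW : i ∈ W <;> by_cases hjW : j ∈ W
      · have hc : switchRel r W i j = r i j := by unfold switchRel; rw [if_pos (by tauto)]
        have hc' : switchRel r W j i = r j i := by unfold switchRel; rw [if_pos (by tauto)]
        have : skew (switchRel r W) i j = skew r i j := by
          unfold skew; simp only [Matrix.of_apply, hc, hc']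
        rw [this, hd]; simp [hiW, hjW]
      · have hc : switchRel r W i j = r j i := by unfold switchRel; rw [if_neg (by tauto)]
        have hc' : switchRel r W j i = r i j := by unfold switchRel; rw [if_neg (by tauto)]
        have : skew (switchRel r W) i j = skew r j i := by
          unfold skew; simp only [Matrix.of_apply, hc, hc']
        rw [this, skew_antisymm hT, hd]; simp [hiW, hjW]
      · have hc : switchRel r W i j = r j i := by unfold switchRel; rw [if_neg (by tauto)]
        have hc' : switchRel r W j i = r i j := by unfold switchRel; rw [if_neg (by tauto)]
        have : skew (switchRel r W) i j = skew r j i := by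
          unfold skew; simp only [Matrix.of_apply, hc, hc']
        rw [this, skew_antisymm hT, hd]; simp [hiW, hjW]
      · have hc : switchRel r W i j = r i j := by unfold switchRel; rw [if_pos (by tauto)]
        have hc' : switchRel r W j i = r j i := by unfold switchRel; rw [if_pos (by tauto)]
        have : skew (switchRel r W) i j = skew r i j := by
          unfold skew; simp only [Matrix.of_apply, hc, hc']
        rw [this, hd]; simp [hiW, hjW]
  unfold tdet
  rw [key, Matrix.det_mul, Matrix.det_mul, Matrix.det_diagonal]
  have : ∏ i : Fin n, d i = 1 ∨ ∏ i : Fin n, d i = -1 := by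
    apply Finset.prod_induction d (fun x => x = 1 ∨ x = -1)
    · rintro a b (ha|ha) (hb|hb) <;> rw [ha, hb] <;> norm_num
    · left; rfl
    · intro i _; rw [hd]; by_cases h : i ∈ W <;> simp [h]
  rcases this with h | h <;> rw [h] <;> ring

lemma skew_eq_AM {n : ℕ} (hpos : 0 < n) (r : Fin n → Fin n → Prop) (hT : IsTournament r)
    (hchain : ∀ a b : Fin n, (a:ℕ) < (b:ℕ) → (b:ℕ) < n-1 → r a b) :
    skew r = AM n (fun i => if r i ⟨n-1, by omega⟩ then 1 else -1) := by
  set last : Fin n := ⟨n-1, by omega⟩ with hlast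
  ext i j
  have hIJ : ∀ k : Fin n, k ≠ last → (k:ℕ) < n-1 := by
    intro k hk
    have h1 : (k:ℕ) ≠ n-1 := fun h => hk (Fin.ext h)
    have := k.isLt; omega
  rcases eq_or_ne i j with rfl | hij
  · have h0 : skew r i i = 0 := by simp [skew, hT.1 i]
    rw [h0, AM, Matrix.of_apply, if_pos rfl]
  · have hvij : (i:ℕ) ≠ (j:ℕ) := fun h => hij (Fin.ext h)
    by_cases hjl : j = last
    · have hil : i ≠ last := by rw [← hjl] at *; exact hij
      have hAMv : AM n (fun i => if r i last then (1:ℤ) else -1) i j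
          = (if r i last then (1:ℤ) else -1) := by
        rw [AM, Matrix.of_apply, if_neg hij, if_pos (by rw [hjl])]
      rw [hAMv, ← hjl] at *
      by_cases hr : r i j
      · rw [show skew r i j = 1 from by simp [skew, hr], if_pos (hjl ▸ hr)]
      · have hr2 : r j i := (hT.2 j i hij.symm).2 hr
        rw [show skew r i j = -1 from by simp [skew, hr, hr2], if_neg (hjl ▸ hr)]
    · by_cases hil : i = last
      · have hj1 : (j:ℕ) < n-1 := hIJ j hjl
        have hAMv : AM n (fun i => if r i last then (1:ℤ) else -1) i j
            = -(if r j last then (1:ℤ) else -1) := by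
          rw [AM, Matrix.of_apply, if_neg hij, if_neg (fun h => hjl (Fin.ext h)),
            if_pos (by rw [hil])]
        rw [hAMv, ← hil]
        by_cases hr : r j i
        · have hr2 : ¬ r i j := by
            intro h; exact ((hT.2 i j hij).1 h) hr
          rw [show skew r i j = -1 from by simp [skew, hr, hr2], if_pos (hil ▸ hr)]
        · have hr2 : r i j := (hT.2 i j hij).2 hr
          rw [show skew r i j = 1 from by simp [skew, hr2], if_neg (hil ▸ hr)]; ring
      · have hi1 : (i:ℕ) < n-1 := hIJ i hil
        have hj1 : (j:ℕ) < n-1 := hIJ j hjl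
        have hAMv : AM n (fun i => if r i last then (1:ℤ) else -1) i j = tent i.val j.val := by
          rw [AM, Matrix.of_apply, if_neg hij, if_neg (fun h => hjl (Fin.ext h)),
            if_neg (fun h => hil (Fin.ext h))]
        rw [hAMv]
        rcases lt_or_gt_of_ne hvij with h | h
        · have hr : r i j := hchain i j h hj1
          rw [show skew r i j = 1 from by simp [skew, hr]]
          unfold tent; rw [if_pos h]
        · have hr : r j i := hchain j i h hi1
          have hr2 : ¬ r i j := fun hh => ((hT.2 i j hij).1 hh) hr
          rw [show skew r i j = -1 from by simp [skew, hr2, hr]]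
          unfold tent; rw [if_neg (by omega), if_pos h]

lemma AM_congr {n : ℕ} (ε₁ ε₂ : Fin n → ℤ) (h : ∀ i : Fin n, (i:ℕ) < n-1 → ε₁ i = ε₂ i) :
    AM n ε₁ = AM n ε₂ := by
  ext i j
  unfold AM
  simp only [Matrix.of_apply]
  rcases eq_or_ne i j with rfl | hij
  · rw [if_pos rfl, if_pos rfl]
  · rw [if_neg hij, if_neg hij]
    by_cases hjn : (j:ℕ) = n-1
    · rw [if_pos hjn, if_pos hjn, h i (by have := i.isLt; have : (i:ℕ) ≠ (j:ℕ) := fun hh => hij (Fin.ext hh); omega)]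
    · rw [if_neg hjn, if_neg hjn]
      by_cases hin : (i:ℕ) = n-1
      · rw [if_pos hin, if_pos hin, h j (by have := j.isLt; omega)]
      · rw [if_neg hin, if_neg hin]

lemma LRel_tournament (n : ℕ) (hn : Even n) : IsTournament (LRel n) := by
  have h2 : n % 2 = 0 := Nat.even_iff.1 hn
  constructor
  · intro i; unfold LRel; omega
  · intro i j hij
    have hvij : (i:ℕ) ≠ (j:ℕ) := fun h => hij (Fin.ext h)
    have hi := i.isLt; have hj := j.isLt
    unfold LRel; omega

lemma relabel_tournament {n : ℕ} {r : Fin n → Fin n → Prop} (hT : IsTournament r)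
    (σ : Equiv.Perm (Fin n)) : IsTournament (fun i j => r (σ i) (σ j)) :=
  ⟨fun i => hT.1 (σ i), fun i j hij => hT.2 (σ i) (σ j) (fun h => hij (σ.injective h))⟩

lemma switch_tournament {V : Type*} {r : V → V → Prop} (hT : IsTournament r) (W : Set V) :
    IsTournament (switchRel r W) := by
  constructor
  · intro i; unfold switchRel; rw [if_pos Iff.rfl]; exact hT.1 i
  · intro i j hij
    unfold switchRel
    by_cases hi : i ∈ W <;> by_cases hj : j ∈ W
    · rw [if_pos (by tauto), if_pos (by tauto)]; exact hT.2 i j hij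
    · rw [if_neg (by tauto), if_neg (by tauto)]; exact hT.2 j i (Ne.symm hij)
    · rw [if_neg (by tauto), if_neg (by tauto)]; exact hT.2 j i (Ne.symm hij)
    · rw [if_pos (by tauto), if_pos (by tauto)]; exact hT.2 i j hij

lemma skew_LRel (n : ℕ) (hn : Even n) (hpos : 0 < n) :
    skew (LRel n) = AM n (fun i => if (i:ℕ) % 2 = 1 then (1:ℤ) else -1) := by
  rw [skew_eq_AM hpos (LRel n) (LRel_tournament n hn)
    (fun a b hab hb => Or.inl ⟨hb, hab⟩)]
  apply AM_congr
  intro i hi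
  have hlastval : ((⟨n-1, by omega⟩ : Fin n) : ℕ) = n-1 := rfl
  by_cases h : (i:ℕ) % 2 = 1
  · have hL : LRel n i ⟨n-1, by omega⟩ := by
      unfold LRel; right; left; exact ⟨rfl, hi, h⟩
    rw [if_pos hL, if_pos h]
  · have hL : ¬ LRel n i ⟨n-1, by omega⟩ := by
      intro hL; unfold LRel at hL; simp only [Fin.val_mk] at hL; omega
    rw [if_neg hL, if_neg h]

lemma filter_lt_eq_Iio (n : ℕ) (hpos : 0 < n) :
    Finset.univ.filter (fun j : Fin n => (j:ℕ) < n-1) = Finset.Iio (⟨n-1, by omega⟩ : Fin n) := by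
  ext j; simp [Fin.lt_def]

lemma tdet_LRel (n : ℕ) (hn : Even n) (hpos : 0 < n) : tdet (LRel n) = ((n:ℤ)-1)^2 := by
  unfold tdet
  rw [skew_LRel n hn hpos, det_AM n hn hpos]
  have hpt : ∀ j : Fin n, (if (j:ℕ) < n-1 then
      (-1:ℤ)^(j:ℕ) * (if (j:ℕ)%2 = 1 then (1:ℤ) else -1) else 0)
      = (if (j:ℕ) < n-1 then (-1:ℤ) else 0) := by
    intro j
    by_cases h : (j:ℕ) < n-1
    · rw [if_pos h, if_pos h]
      rcases Nat.even_or_odd (j:ℕ) with h2|h2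
      · rw [h2.neg_one_pow, if_neg (by rw [Nat.even_iff] at h2; omega)]; ring
      · rw [h2.neg_one_pow, if_pos (by rw [Nat.odd_iff] at h2; exact h2)]; ring
    · rw [if_neg h, if_neg h]
  rw [Finset.sum_congr rfl (fun j _ => hpt j)]
  have hsum : (∑ j : Fin n, if (j:ℕ) < n-1 then (-1:ℤ) else 0) = -((n:ℤ)-1) := by
    rw [← Finset.sum_filter, filter_lt_eq_Iio n hpos, Finset.sum_const, Fin.card_Iio,
      nsmul_eq_mul]
    have hc : (((⟨n-1, by omega⟩ : Fin n):ℕ):ℤ) = (n:ℤ)-1 := by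
      have : ((⟨n-1, by omega⟩ : Fin n):ℕ) = n-1 := rfl
      rw [this]; omega
    rw [hc]; ring
  rw [hsum]; ring

lemma sort_tournament {n : ℕ} (hpos : 0 < n) (r : Fin n → Fin n → Prop) (hT : IsTournament r)
    (htr : IsTransitiveOn r (Finset.univ.filter fun i : Fin n => i.val < n - 1)) :
    ∃ σ : Equiv.Perm (Fin n), (∀ v : Fin n, (v:ℕ) = n-1 → σ v = v) ∧
      ∀ a b : Fin n, (a:ℕ) < (b:ℕ) → (b:ℕ) < n-1 → r (σ a) (σ b) := by
  classical
  set last : Fin n := ⟨n-1, by omega⟩ with hlast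
  have hlv : (last:ℕ) = n-1 := rfl
  set score : Fin n → ℕ :=
    fun v => (Finset.univ.filter (fun u : Fin n => (u:ℕ) < n-1 ∧ r u v)).card with hscore
  have hmemX : ∀ v : Fin n, (v:ℕ) < n-1 →
      v ∈ (Finset.univ.filter fun i : Fin n => i.val < n - 1) :=
    fun v hv => Finset.mem_filter.2 ⟨Finset.mem_univ _, hv⟩
  have hscore_lt : ∀ v : Fin n, score v < n := by
    intro v
    have hsub : (Finset.univ.filter (fun u : Fin n => (u:ℕ) < n-1 ∧ r u v))
        ⊆ Finset.univ.erase v := by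
      intro u hu
      obtain ⟨-, -, hru⟩ := Finset.mem_filter.1 hu
      exact Finset.mem_erase.2 ⟨fun h => hT.1 v (h ▸ hru), Finset.mem_univ _⟩
    have h1 := Finset.card_le_card hsub
    have h2 : (Finset.univ.erase v).card = n - 1 := by
      rw [Finset.card_erase_of_mem (Finset.mem_univ _), Finset.card_univ, Fintype.card_fin]
    simp only [hscore]
    omega
  have hmono : ∀ a b : Fin n, (a:ℕ) < n-1 → (b:ℕ) < n-1 → r a b → score a < score b := by
    intro a b ha hb hab
    have hsub : insert a (Finset.univ.filter (fun u : Fin n => (u:ℕ) < n-1 ∧ r u a))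
        ⊆ Finset.univ.filter (fun u : Fin n => (u:ℕ) < n-1 ∧ r u b) := by
      intro u hu
      rcases Finset.mem_insert.1 hu with rfl | hu
      · exact Finset.mem_filter.2 ⟨Finset.mem_univ _, ha, hab⟩
      · obtain ⟨-, hu1, hu2⟩ := Finset.mem_filter.1 hu
        exact Finset.mem_filter.2 ⟨Finset.mem_univ _, hu1,
          htr u (hmemX u hu1) a (hmemX a ha) b (hmemX b hb) hu2 hab⟩
    have h1 := Finset.card_le_card hsub
    rw [Finset.card_insert_of_notMem (fun hmem => hT.1 a (Finset.mem_filter.1 hmem).2.2)] at h1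
    simp only [hscore]
    omega
  have hconv : ∀ a b : Fin n, (a:ℕ) < n-1 → (b:ℕ) < n-1 → score a < score b → r a b := by
    intro a b ha hb hs
    rcases eq_or_ne a b with rfl | hab
    · exact absurd hs (lt_irrefl _)
    · by_contra hr
      have := hmono b a hb ha ((hT.2 b a hab.symm).2 hr)
      omega
  set weight : Fin n → ℕ := fun v => if (v:ℕ) < n-1 then score v else n with hweight
  have hw_inj : Function.Injective weight := by
    intro a b hab
    by_contra hne
    simp only [hweight] at hab
    by_cases ha : (a:ℕ) < n-1 <;> by_cases hb : (b:ℕ) < n-1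
    · rw [if_pos ha, if_pos hb] at hab
      by_cases hr : r a b
      · have := hmono a b ha hb hr; omega
      · have := hmono b a hb ha ((hT.2 b a (fun h => hne h.symm)).2 hr); omega
    · rw [if_pos ha, if_neg hb] at hab
      have := hscore_lt a; omega
    · rw [if_neg ha, if_pos hb] at hab
      have := hscore_lt b; omega
    · exact hne (Fin.ext (by have := a.isLt; have := b.isLt; omega))
  set σ : Equiv.Perm (Fin n) := Tuple.sort weight with hσ
  have hsm : StrictMono (weight ∘ σ) :=
    (Tuple.monotone_sort weight).strictMono_of_injective (hw_inj.comp σ.injective)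
  have hfix : σ last = last := by
    by_contra hne'
    have h1 : σ.symm last ≠ last := fun h => hne' (((Equiv.symm_apply_eq σ).1 h).symm)
    have h2 : σ.symm last < last := by
      rw [Fin.lt_def]
      have h3 : ((σ.symm last : Fin n) : ℕ) ≠ n-1 := fun h => h1 (Fin.ext h)
      have := (σ.symm last).isLt
      omega
    have h4 := hsm h2
    simp only [Function.comp_apply, Equiv.apply_symm_apply] at h4
    have h5 : weight last = n := by
      simp only [hweight]
      rw [if_neg (show ¬ (last:ℕ) < n-1 by rw [hlv]; omega)]
    have h6 : weight (σ last) ≤ n := by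
      rw [hweight]
      by_cases h : ((σ last : Fin n):ℕ) < n-1
      · simp only [if_pos h]; exact (hscore_lt _).le
      · simp only [if_neg h]; exact le_refl n
    omega
  refine ⟨σ, fun v hv => by rw [show v = last from Fin.ext hv, hfix], ?_⟩
  intro a b hab hb
  have halast : a ≠ last := fun h => by rw [h] at hab; rw [hlv] at hab; have := b.isLt; omega
  have hblast : b ≠ last := fun h => by rw [h] at hb; rw [hlv] at hb; omega
  have hσa : ((σ a : Fin n):ℕ) < n-1 := by
    have h1 : σ a ≠ last := fun h => halast (σ.injective (h.trans hfix.symm))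
    have h2 : ((σ a : Fin n):ℕ) ≠ n-1 := fun h => h1 (Fin.ext h)
    have := (σ a).isLt; omega
  have hσb : ((σ b : Fin n):ℕ) < n-1 := by
    have h1 : σ b ≠ last := fun h => hblast (σ.injective (h.trans hfix.symm))
    have h2 : ((σ b : Fin n):ℕ) ≠ n-1 := fun h => h1 (Fin.ext h)
    have := (σ b).isLt; omega
  have h4 := hsm (show a < b from Fin.lt_def.2 hab)
  simp only [Function.comp_apply, hweight] at h4
  rw [if_pos hσa, if_pos hσb] at h4
  exact hconv _ _ hσa hσb h4

theorem stmt18 {n : ℕ} (hn : Even n) (hpos : 0 < n) (r : Fin n → Fin n → Prop)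
    (hT : IsTournament r)
    (htr : IsTransitiveOn r (Finset.univ.filter fun i : Fin n => i.val < n - 1)) :
    tdet r ≤ ((n : ℤ) - 1) ^ 2 ∧
      (tdet r = ((n : ℤ) - 1) ^ 2 ↔
        ∃ e : Fin n ≃ Fin n, SwitchEquiv r (fun i j => LRel n (e i) (e j))) := by
  classical
  have hn2 : 2 ≤ n := by
    rcases hn with ⟨k, hk⟩
    omega
  set last : Fin n := ⟨n-1, by omega⟩ with hlast
  have hlv : (last:ℕ) = n-1 := rfl
  obtain ⟨σ, hfix0, hchain⟩ := sort_tournament hpos r hT htr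
  have hfix : σ last = last := hfix0 last hlv
  set r' : Fin n → Fin n → Prop := fun i j => r (σ i) (σ j) with hr'
  have hT' : IsTournament r' := relabel_tournament hT σ
  set εr : Fin n → ℤ := fun i => if r' i last then 1 else -1 with hεr
  set εL : Fin n → ℤ := fun i => if (i:ℕ) % 2 = 1 then (1:ℤ) else -1 with hεL
  have hskew : skew r' = AM n εr := skew_eq_AM hpos r' hT' hchain
  set S : ℤ := ∑ j : Fin n, if (j:ℕ) < n-1 then (-1:ℤ)^(j:ℕ) * εr j else 0 with hS
  have hdet : tdet r = S ^ 2 := by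
    rw [← tdet_relabel r σ]
    show (skew r').det = S^2
    rw [hskew, det_AM n hn hpos εr]
  set A : Finset (Fin n) := Finset.univ.filter (fun j : Fin n => (j:ℕ) < n-1) with hA
  have hcard : A.card = n - 1 := by
    rw [hA, filter_lt_eq_Iio n hpos, Fin.card_Iio]
  have hcardZ : ((A.card : ℤ)) = (n:ℤ) - 1 := by rw [hcard]; omega
  have hSA : ∑ j ∈ A, (-1:ℤ)^(j:ℕ) * εr j = S := by
    rw [hS, hA, Finset.sum_filter]
  have hpm : ∀ j : Fin n, (-1:ℤ)^(j:ℕ) * εr j = 1 ∨ (-1:ℤ)^(j:ℕ) * εr j = -1 := by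
    intro j
    have h1 : εr j = 1 ∨ εr j = -1 := by
      rw [hεr]; by_cases h : r' j last
      · left; simp [h]
      · right; simp [h]
    rcases Nat.even_or_odd (j:ℕ) with h2 | h2
    · rw [h2.neg_one_pow]; rcases h1 with h|h <;> rw [h] <;> norm_num
    · rw [h2.neg_one_pow]; rcases h1 with h|h <;> rw [h] <;> norm_num
  have hub : S ≤ (n:ℤ) - 1 := by
    rw [← hSA]
    calc ∑ j ∈ A, (-1:ℤ)^(j:ℕ) * εr j ≤ ∑ _j ∈ A, (1:ℤ) :=
          Finset.sum_le_sum (fun j _ => by rcases hpm j with h|h <;> omega)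
    _ = (A.card : ℤ) := by rw [Finset.sum_const, nsmul_eq_mul, mul_one]
    _ = (n:ℤ) - 1 := hcardZ
  have hlb : -((n:ℤ) - 1) ≤ S := by
    rw [← hSA]
    calc -((n:ℤ)-1) = ∑ _j ∈ A, (-1:ℤ) := by
          rw [Finset.sum_const, nsmul_eq_mul, mul_neg_one, hcardZ]
    _ ≤ ∑ j ∈ A, (-1:ℤ)^(j:ℕ) * εr j :=
          Finset.sum_le_sum (fun j _ => by rcases hpm j with h|h <;> omega)
  -- the εr → r' decoding
  have hεr_dec : ∀ j : Fin n, (εr j = 1 → r' j last) ∧ (εr j = -1 → ¬ r' j last) := by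
    intro j
    constructor
    · intro h
      by_contra hr
      rw [hεr] at h; simp only [if_neg hr] at h; omega
    · intro h hr
      rw [hεr] at h; simp only [if_pos hr] at h; omega
  -- generic: from pointwise εr = εL  (on chain) produce the switch-equivalence with W
  have hmain : ∀ W : Set (Fin n), IsTournament (switchRel r W) →
      (∀ a b : Fin n, (a:ℕ) < (b:ℕ) → (b:ℕ) < n-1 → switchRel r W (σ a) (σ b)) →
      (∀ i : Fin n, (i:ℕ) < n-1 →
        (if switchRel r W (σ i) (σ last) then (1:ℤ) else -1) = εL i) →
      ∃ e : Fin n ≃ Fin n, SwitchEquiv r (fun i j => LRel n (e i) (e j)) := by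
    intro W hTW hchainW hepsW
    set SW : Fin n → Fin n → Prop := fun a b => switchRel r W (σ a) (σ b) with hSW
    have hTSW : IsTournament SW := relabel_tournament hTW σ
    have hskewSW : skew SW = AM n (fun i => if SW i last then (1:ℤ) else -1) :=
      skew_eq_AM hpos SW hTSW hchainW
    have hAMeq : AM n (fun i => if SW i last then (1:ℤ) else -1) = AM n εL :=
      AM_congr _ _ (fun i hi => hepsW i hi)
    have hskeq : skew (LRel n) = skew SW := by
      rw [skew_LRel n hn hpos, hskewSW, hAMeq]
    have hiff : ∀ a b : Fin n, LRel n a b ↔ SW a b := by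
      intro a b
      rw [rel_iff_skew_one (LRel n) a b, rel_iff_skew_one SW a b, hskeq]
    refine ⟨σ.symm, W, fun i j => ?_⟩
    have h1 := hiff (σ.symm i) (σ.symm j)
    simp only [hSW, Equiv.apply_symm_apply] at h1
    exact h1
  constructor
  · rw [hdet]
    exact sq_le_sq' (by linarith) hub
  constructor
  · -- equality → switching equivalent to L_n
    intro heq
    have hS2 : S^2 = ((n:ℤ)-1)^2 := by rw [← hdet]; exact heq
    have hcases : S = (n:ℤ)-1 ∨ S = -((n:ℤ)-1) := by
      have h0 : (S - ((n:ℤ)-1)) * (S + ((n:ℤ)-1)) = 0 := by linear_combination hS2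
      rcases mul_eq_zero.1 h0 with h|h
      · left; linarith
      · right; linarith
    rcases hcases with hSv | hSv
    · -- S = n-1 : all terms 1, εr i = (-1)^i ; switch at {last}
      have hall : ∀ j ∈ A, (-1:ℤ)^(j:ℕ) * εr j = 1 := by
        have hsum0 : ∑ j ∈ A, (1 - (-1:ℤ)^(j:ℕ) * εr j) = 0 := by
          rw [Finset.sum_sub_distrib, hSA, Finset.sum_const, nsmul_eq_mul, mul_one, hcardZ, hSv]
          ring
        intro j hj
        have := (Finset.sum_eq_zero_iff_of_nonneg
          (fun j _ => by rcases hpm j with h|h <;> omega)).1 hsum0 j hj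
        omega
      have hmem : ∀ j : Fin n, (j:ℕ) < n-1 → j ∈ A :=
        fun j hj => Finset.mem_filter.2 ⟨Finset.mem_univ _, hj⟩
      apply hmain ({last} : Set (Fin n)) (switch_tournament hT _)
      · -- chain property of switched relation
        intro a b hab hb
        have ha' : (a:ℕ) < n-1 := by omega
        have hsa : σ a ≠ last := fun h => by
          have : a = last := σ.injective (h.trans hfix.symm)
          rw [this, hlv] at ha'; omega
        have hsb : σ b ≠ last := fun h => by
          have : b = last := σ.injective (h.trans hfix.symm)
          rw [this, hlv] at hb; omega
        unfold switchRel
        rw [if_pos (iff_of_false (by simpa using hsa) (by simpa using hsb))]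
        exact hchain a b hab hb
      · intro i hi
        have hsi : σ i ≠ last := fun h => by
          have : i = last := σ.injective (h.trans hfix.symm)
          rw [this, hlv] at hi; omega
        have hcond : ¬ ((σ i ∈ ({last} : Set (Fin n))) ↔ σ last ∈ ({last} : Set (Fin n))) := by
          rw [hfix]; simp [hsi]
        have hswi : switchRel r ({last} : Set (Fin n)) (σ i) (σ last) ↔ r' last i := by
          unfold switchRel
          rw [if_neg hcond]
        have hil : i ≠ last := fun h => by rw [h, hlv] at hi; omega
        have hval : (-1:ℤ)^(i:ℕ) * εr i = 1 := hall i (hmem i hi)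
        rcases Nat.even_or_odd (i:ℕ) with h2 | h2
        · -- i even : εr i = 1, r' i last, ¬ r' last i, εL i = -1
          have he : εr i = 1 := by rw [h2.neg_one_pow] at hval; omega
          have hr1 : r' i last := (hεr_dec i).1 he
          have hr2 : ¬ r' last i := fun h => ((hT'.2 i last hil).1 hr1) h
          simp only [hεL]
          rw [if_neg (fun h => hr2 (hswi.1 h)), if_neg (by rw [Nat.even_iff] at h2; omega)]
        · -- i odd : εr i = -1, ¬ r' i last, r' last i, εL i = 1
          have he : εr i = -1 := by rw [h2.neg_one_pow] at hval; omega
          have hr1 : ¬ r' i last := (hεr_dec i).2 he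
          have hr2 : r' last i := (hT'.2 last i (Ne.symm hil)).2 hr1
          simp only [hεL]
          rw [if_pos (hswi.2 hr2), if_pos (by rw [Nat.odd_iff] at h2; exact h2)]
    · -- S = -(n-1) : all terms -1, εr = εL ; W = ∅
      have hall : ∀ j ∈ A, (-1:ℤ)^(j:ℕ) * εr j = -1 := by
        have hsum0 : ∑ j ∈ A, ((-1:ℤ)^(j:ℕ) * εr j + 1) = 0 := by
          rw [Finset.sum_add_distrib, hSA, Finset.sum_const, nsmul_eq_mul, mul_one, hcardZ, hSv]
          ring
        intro j hj
        have := (Finset.sum_eq_zero_iff_of_nonneg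
          (fun j _ => by rcases hpm j with h|h <;> omega)).1 hsum0 j hj
        omega
      have hmem : ∀ j : Fin n, (j:ℕ) < n-1 → j ∈ A :=
        fun j hj => Finset.mem_filter.2 ⟨Finset.mem_univ _, hj⟩
      apply hmain (∅ : Set (Fin n)) (switch_tournament hT _)
      · intro a b hab hb
        unfold switchRel
        rw [if_pos (by simp)]
        exact hchain a b hab hb
      · intro i hi
        have hswi : switchRel r (∅ : Set (Fin n)) (σ i) (σ last) ↔ r' i last := by
          unfold switchRel
          rw [if_pos (by simp)]
        have hval : (-1:ℤ)^(i:ℕ) * εr i = -1 := hall i (hmem i hi)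
        rcases Nat.even_or_odd (i:ℕ) with h2 | h2
        · have he : εr i = -1 := by rw [h2.neg_one_pow] at hval; omega
          have hr1 : ¬ r' i last := (hεr_dec i).2 he
          simp only [hεL]
          rw [if_neg (fun h => hr1 (hswi.1 h)), if_neg (by rw [Nat.even_iff] at h2; omega)]
        · have he : εr i = 1 := by rw [h2.neg_one_pow] at hval; omega
          have hr1 : r' i last := (hεr_dec i).1 he
          simp only [hεL]
          rw [if_pos (hswi.2 hr1), if_pos (by rw [Nat.odd_iff] at h2; exact h2)]
  · -- switching equivalence → equality
    rintro ⟨e, W, hW⟩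
    have h1 : tdet (fun i j => LRel n (e i) (e j)) = tdet (switchRel r W) := tdet_congr hW
    rw [tdet_relabel (LRel n) e, tdet_switch hT W] at h1
    rw [← h1, tdet_LRel n hn hpos]

end Proofs
end
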